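/- Let B be a density matrix on ℂ^d, let L ∈ M_d(ℂ) be Hermitian, fix k ∈ {1,…,d}, and set α_k := 1 − B_{kk}. Then |B_{kk}·L_{kk}·tr(BL) + (LBL)_{kk} − (1/2)·((BL)_{kk} + (LB)_{kk})·(tr(BL) + L_{kk})| ≤ 5·‖L‖²·α_k, where M_{kk} denotes the (k,k) entry of a matrix M. -/

import Mathlib

open Matrix
open scoped Matrix.Norms.L2Operator ComplexOrder

private lemma DBB.norm_sq_eq {d : ℕ} (x : EuclideanSpace ℂ (Fin d)) :
    ‖x‖ ^ 2 = ∑ i, ‖x i‖ ^ 2 := by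
  rw [EuclideanSpace.norm_eq, Real.sq_sqrt (by positivity)]

private lemma DBB.quad_bound {d : ℕ} (M : Matrix (Fin d) (Fin d) ℂ)
    (x : EuclideanSpace ℂ (Fin d)) :
    ‖∑ i, ∑ j, (starRingEnd ℂ) (x i) * M i j * x j‖ ≤ ‖M‖ * ‖x‖ ^ 2 := by
  have h1 : (∑ i, ∑ j, (starRingEnd ℂ) (x i) * M i j * x j)
      = inner (𝕜 := ℂ) x ((EuclideanSpace.equiv (Fin d) ℂ).symm (M *ᵥ x)) := by
    rw [PiLp.inner_apply]
    simp only [RCLike.inner_apply']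
    simp [Matrix.mulVec, dotProduct, Finset.mul_sum, mul_assoc]
  rw [h1]
  calc ‖inner (𝕜 := ℂ) x ((EuclideanSpace.equiv (Fin d) ℂ).symm (M *ᵥ x))‖
      ≤ ‖x‖ * ‖(EuclideanSpace.equiv (Fin d) ℂ).symm (M *ᵥ x)‖ := norm_inner_le_norm _ _
    _ ≤ ‖x‖ * (‖M‖ * ‖x‖) := by gcongr; exact M.l2_opNorm_mulVec x
    _ = ‖M‖ * ‖x‖ ^ 2 := by ring

open scoped MatrixOrder in
private lemma DBB.trace_bound {d : ℕ} (C M : Matrix (Fin d) (Fin d) ℂ) (hC : C.PosSemidef) :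
    ‖(C * M).trace‖ ≤ ‖M‖ * (C.trace).re := by
  set S := CFC.sqrt C with hSdef
  have hS : S * S = C := by rw [← pow_two]; exact CFC.sq_sqrt C hC.nonneg
  have hSh : S.IsHermitian := (CFC.sqrt_nonneg C).posSemidef.1
  have hconj : ∀ p q, S p q = (starRingEnd ℂ) (S q p) := by
    intro p q
    conv_lhs => rw [← hSh.eq]
    simp [Matrix.conjTranspose_apply]
  have hcyc : (C * M).trace = (S * M * S).trace := by
    rw [← hS]; exact (Matrix.trace_mul_cycle S M S).symm
  set x : Fin d → EuclideanSpace ℂ (Fin d) :=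
    fun i => (EuclideanSpace.equiv (Fin d) ℂ).symm (fun a => S a i) with hx
  have hentry : ∀ i, (S * M * S) i i = ∑ a, ∑ b, (starRingEnd ℂ) (x i a) * M a b * (x i b) := by
    intro i
    rw [Matrix.mul_apply]
    have e1 : ∀ b, (S * M) i b * S b i = ∑ a, S i a * M a b * S b i := by
      intro b; rw [Matrix.mul_apply, Finset.sum_mul]
    rw [Finset.sum_congr rfl fun b _ => e1 b, Finset.sum_comm]
    refine Finset.sum_congr rfl fun a _ => Finset.sum_congr rfl fun b _ => ?_
    have h2 : x i a = S a i := rfl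
    have h3 : x i b = S b i := rfl
    rw [h2, h3, hconj i a]
  have hxnorm : ∀ i, ‖x i‖ ^ 2 = (C i i).re := by
    intro i
    rw [DBB.norm_sq_eq]
    have hc : C i i = ∑ a, S i a * S a i := by rw [← hS, Matrix.mul_apply]
    rw [hc, Complex.re_sum]
    refine Finset.sum_congr rfl fun a _ => ?_
    rw [hconj i a, ← Complex.normSq_eq_conj_mul_self]
    have h2 : x i a = S a i := rfl
    rw [h2]
    simp [Complex.normSq_eq_norm_sq, ← Complex.ofReal_pow]
  rw [hcyc, Matrix.trace]
  calc ‖∑ i, (S * M * S).diag i‖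
      ≤ ∑ i, ‖(S * M * S) i i‖ := norm_sum_le _ _
    _ ≤ ∑ i, ‖M‖ * ‖x i‖ ^ 2 := by
        refine Finset.sum_le_sum fun i _ => ?_
        rw [hentry i]
        exact DBB.quad_bound M (x i)
    _ = ‖M‖ * (C.trace).re := by
        rw [← Finset.mul_sum, Matrix.trace, Complex.re_sum]
        congr 1
        exact Finset.sum_congr rfl fun i _ => hxnorm i

private lemma DBB.outer_norm_le {d : ℕ} (f : EuclideanSpace ℂ (Fin d)) :
    ‖Matrix.vecMulVec (f : Fin d → ℂ) (star (f : Fin d → ℂ))‖ ≤ ‖f‖ ^ 2 := by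
  rw [Matrix.l2_opNorm_def]
  refine ContinuousLinearMap.opNorm_le_bound _ (by positivity) fun x => ?_
  have happ : (Matrix.toEuclideanLin.trans LinearMap.toContinuousLinearMap
      (Matrix.vecMulVec (f : Fin d → ℂ) (star (f : Fin d → ℂ)))) x
      = inner (𝕜 := ℂ) f x • f := by
    apply (EuclideanSpace.equiv (Fin d) ℂ).injective
    funext i
    show (Matrix.vecMulVec (f : Fin d → ℂ) (star (f : Fin d → ℂ)) *ᵥ x) i = _
    simp only [Matrix.mulVec, dotProduct, Matrix.vecMulVec_apply, PiLp.smul_apply,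
      PiLp.inner_apply, RCLike.inner_apply', smul_eq_mul, Pi.star_apply]
    show _ = (∑ j, (starRingEnd ℂ) (f j) * x j) * f i
    rw [Finset.sum_mul]
    exact Finset.sum_congr rfl fun j _ => by rw [Complex.star_def]; ring
  rw [happ, norm_smul]
  calc ‖inner (𝕜 := ℂ) f x‖ * ‖f‖ ≤ (‖f‖ * ‖x‖) * ‖f‖ := by
        gcongr; exact norm_inner_le_norm _ _
    _ = ‖f‖ ^ 2 * ‖x‖ := by ring

private lemma DBB.col_norm_le {d : ℕ} (M : Matrix (Fin d) (Fin d) ℂ) (k : Fin d) :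
    ‖((EuclideanSpace.equiv (Fin d) ℂ).symm (fun j => M j k) : EuclideanSpace ℂ (Fin d))‖
      ≤ ‖M‖ := by
  have h := M.l2_opNorm_mulVec (EuclideanSpace.single k 1)
  rw [EuclideanSpace.norm_single] at h
  have he : (EuclideanSpace.equiv (Fin d) ℂ).symm (M *ᵥ (EuclideanSpace.single k 1))
      = (EuclideanSpace.equiv (Fin d) ℂ).symm (fun j => M j k) := by
    congr 1
    funext i
    simp [Matrix.mulVec, dotProduct, EuclideanSpace.single_apply]
  rw [he] at h
  simpa using h

private lemma DBB.component_le {d : ℕ} (x : EuclideanSpace ℂ (Fin d)) (i : Fin d) :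
    ‖x i‖ ≤ ‖x‖ := by
  have h : ‖x i‖ ^ 2 ≤ ‖x‖ ^ 2 := by
    rw [DBB.norm_sq_eq]
    exact Finset.single_le_sum (f := fun j => ‖x j‖ ^ 2)
      (fun j _ => by positivity) (Finset.mem_univ i)
  calc ‖x i‖ = Real.sqrt (‖x i‖ ^ 2) := by
        rw [Real.sqrt_sq (by positivity)]
    _ ≤ Real.sqrt (‖x‖ ^ 2) := Real.sqrt_le_sqrt h
    _ = ‖x‖ := Real.sqrt_sq (norm_nonneg _)

private lemma DBB.psd_diag {d : ℕ} {B : Matrix (Fin d) (Fin d) ℂ} (hB : B.PosSemidef)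
    (i : Fin d) : 0 ≤ (B i i).re ∧ (B i i).im = 0 := by
  have hstar : star (Pi.single i 1 : Fin d → ℂ) = Pi.single i 1 := by
    funext l; by_cases h : l = i <;> simp [Pi.single_apply, h]
  have h := hB.dotProduct_mulVec_nonneg (Pi.single i 1)
  have he : star (Pi.single i (1:ℂ)) ⬝ᵥ (B *ᵥ Pi.single i 1) = B i i := by
    rw [Matrix.mulVec_single, hstar]
    simp [single_dotProduct]
  rw [he, Complex.le_def] at h
  exact ⟨by simpa using h.1, by simpa using h.2.symm⟩

private lemma DBB.psd_minor {d : ℕ} {B : Matrix (Fin d) (Fin d) ℂ} (hB : B.PosSemidef)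
    (j k : Fin d) : ‖B j k‖ ^ 2 ≤ (B j j).re * (B k k).re := by
  set β := B j k with hβ
  set p := Complex.normSq β with hp
  set A := (B j j).re with hA
  set C := (B k k).re with hC
  have hA0 : 0 ≤ A := (DBB.psd_diag hB j).1
  have hC0 : 0 ≤ C := (DBB.psd_diag hB k).1
  have hstar : ∀ (i : Fin d), star (Pi.single i 1 : Fin d → ℂ) = Pi.single i 1 :=
    fun i => by funext l; by_cases h : l = i <;> simp [Pi.single_apply, h]
  have hkj : B k j = (starRingEnd ℂ) β := by
    rw [hβ]; conv_lhs => rw [← hB.1.eq]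
    simp [Matrix.conjTranspose_apply]
  have key : ∀ t : ℝ, 0 ≤ t^2 * p * A - 2*t*p + C := by
    intro t
    set c : ℂ := -(t:ℂ) * β with hc
    have h := hB.dotProduct_mulVec_nonneg (c • (Pi.single j 1 : Fin d → ℂ) + (Pi.single k 1 : Fin d → ℂ))
    have he : star (c • (Pi.single j 1 : Fin d → ℂ) + (Pi.single k 1 : Fin d → ℂ)) ⬝ᵥ
        (B *ᵥ (c • (Pi.single j 1 : Fin d → ℂ) + (Pi.single k 1 : Fin d → ℂ)))
        = (starRingEnd ℂ) c * c * B j j + (starRingEnd ℂ) c * β + c * B k j + B k k := by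
      rw [Matrix.mulVec_add, Matrix.mulVec_smul, Matrix.mulVec_single_one, Matrix.mulVec_single_one,
        star_add, star_smul, add_dotProduct, smul_dotProduct,
        dotProduct_add, dotProduct_add, hstar j, hstar k]
      simp only [dotProduct_smul, single_dotProduct, Matrix.col_apply, smul_eq_mul, mul_one,
        one_mul, Complex.star_def]
      ring
    have hval : (starRingEnd ℂ) c * c * B j j + (starRingEnd ℂ) c * β + c * B k j + B k k
        = (((t^2 * p) : ℝ) : ℂ) * B j j - (((2*t*p) : ℝ) : ℂ) + B k k := by
      rw [hkj, hc, hp]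
      simp only [_root_.map_mul, _root_.map_neg, Complex.conj_ofReal]
      push_cast
      rw [Complex.normSq_eq_conj_mul_self]
      ring
    rw [he, hval, Complex.le_def] at h
    have hre := h.1
    simp only [Complex.add_re, Complex.sub_re, Complex.re_ofReal_mul, Complex.ofReal_re,
      Complex.zero_re] at hre
    linarith [hre]
  have hpabs : ‖β‖ ^ 2 = p := Complex.sq_norm β
  rcases eq_or_lt_of_le (Complex.normSq_nonneg β) with h0 | hpos
  · have hp0 : p = 0 := by rw [hp, ← h0]
    rw [hpabs, hp0]; positivity
  · have hppos : 0 < p := by rw [hp]; exact hpos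
    have hp0 : p ≠ 0 := ne_of_gt hppos
    have hApos : 0 < A := by
      rcases eq_or_lt_of_le hA0 with hA0' | h; swap; · exact h
      exfalso
      have hkey := key ((C+1)/(2*p))
      have h2 : ((C+1)/(2*p))^2 * p * A = 0 := by rw [← hA0']; ring
      have h3 : 2*((C+1)/(2*p))*p = C + 1 := by field_simp
      linarith
    have hkey := key (1/A)
    have h1 : (1/A)^2 * p * A = p/A := by field_simp
    have h2 : 2*(1/A)*p = 2*(p/A) := by ring
    rw [h1, h2] at hkey
    have h4 : p / A ≤ C := by linarith
    have h5 : p ≤ C * A := (div_le_iff₀ hApos).mp h4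
    rw [hpabs]; nlinarith

/-- For a density matrix `B`, a Hermitian matrix `L` and a fixed index `k`, with
`α_k := 1 − B_{kk}`, one has
`|B_{kk} L_{kk} tr(BL) + (LBL)_{kk} − (1/2)((BL)_{kk} + (LB)_{kk})(tr(BL) + L_{kk})| ≤ 5‖L‖² α_k`. -/
theorem diagonal_block_bound (d : ℕ) (hd : 1 ≤ d)
    (B L : Matrix (Fin d) (Fin d) ℂ)
    (hB : B.PosSemidef) (hB1 : B.trace = 1)
    (hL : L.IsHermitian) (k : Fin d) :
    ‖B k k * L k k * (B * L).trace + (L * B * L) k k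
        - (1 / 2) * ((B * L) k k + (L * B) k k) * ((B * L).trace + L k k)‖
      ≤ 5 * ‖L‖ ^ 2 * (1 - (B k k).re) := by
  classical
  set S : Finset (Fin d) := Finset.univ.erase k with hSdef
  have hsplit : ∀ f : Fin d → ℂ, (∑ j, f j) = f k + ∑ j ∈ S, f j := fun f =>
    (Finset.add_sum_erase Finset.univ f (Finset.mem_univ k)).symm
  have hsplitR : ∀ f : Fin d → ℝ, (∑ j, f j) = f k + ∑ j ∈ S, f j := fun f =>
    (Finset.add_sum_erase Finset.univ f (Finset.mem_univ k)).symm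
  set s₁ : ℂ := ∑ j ∈ S, B k j * L j k with hs₁def
  set s₂ : ℂ := ∑ j ∈ S, L k j * B j k with hs₂def
  set r : ℂ := ∑ i ∈ S, ∑ j ∈ S, B i j * L j i with hrdef
  set m : ℂ := ∑ i ∈ S, ∑ j ∈ S, L k i * B i j * L j k with hmdef
  -- decomposition identities
  have hu : (B * L) k k = B k k * L k k + s₁ := by
    rw [Matrix.mul_apply, hsplit (fun j => B k j * L j k)]
  have hv : (L * B) k k = L k k * B k k + s₂ := by
    rw [Matrix.mul_apply, hsplit (fun j => L k j * B j k)]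
  have ht : (B * L).trace = B k k * L k k + s₁ + s₂ + r := by
    have h1 : (B * L).trace = ∑ i, ∑ j, B i j * L j i := by
      rw [Matrix.trace]
      exact Finset.sum_congr rfl fun i _ => by rw [Matrix.diag_apply, Matrix.mul_apply]
    rw [h1, hsplit (fun i => ∑ j, B i j * L j i), hsplit (fun j => B k j * L j k)]
    have h2 : ∀ i, (∑ j, B i j * L j i) = B i k * L k i + ∑ j ∈ S, B i j * L j i :=
      fun i => hsplit _
    rw [Finset.sum_congr rfl (fun i (_ : i ∈ S) => h2 i), Finset.sum_add_distrib]
    have h3 : ∑ i ∈ S, B i k * L k i = s₂ := by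
      rw [hs₂def]; exact Finset.sum_congr rfl fun i _ => mul_comm _ _
    rw [h3]; ring
  have hw : (L * B * L) k k = L k k * B k k * L k k + s₂ * L k k + L k k * s₁ + m := by
    have h1 : (L * B * L) k k = ∑ i, ∑ j, L k j * B j i * L i k := by
      rw [Matrix.mul_apply]
      refine Finset.sum_congr rfl fun i _ => ?_
      rw [Matrix.mul_apply, Finset.sum_mul]
    rw [h1, hsplit (fun i => ∑ j, L k j * B j i * L i k),
      hsplit (fun j => L k j * B j k * L k k)]
    have h2 : ∀ i, (∑ j, L k j * B j i * L i k)
        = L k k * B k i * L i k + ∑ j ∈ S, L k j * B j i * L i k := fun i => hsplit _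
    rw [Finset.sum_congr rfl (fun i (_ : i ∈ S) => h2 i), Finset.sum_add_distrib]
    have h3 : ∑ i ∈ S, ∑ j ∈ S, L k j * B j i * L i k = m := by
      rw [hmdef]; exact Finset.sum_comm
    have h4 : ∑ i ∈ S, L k k * B k i * L i k = L k k * s₁ := by
      rw [hs₁def, Finset.mul_sum]
      exact Finset.sum_congr rfl fun i _ => by ring
    have h5 : ∑ j ∈ S, L k j * B j k * L k k = s₂ * L k k := by
      rw [hs₂def, Finset.sum_mul]
    rw [h3, h4, h5]; ring
  have key : B k k * L k k * (B * L).trace + (L * B * L) k k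
      - (1 / 2) * ((B * L) k k + (L * B) k k) * ((B * L).trace + L k k)
      = (s₁ + s₂)/2 * ((1 - B k k) * L k k - (s₁ + s₂) - r) + m := by
    rw [hu, hv, ht, hw]; ring
  -- basic real quantities
  set a : ℝ := 1 - (B k k).re with hadef
  set N : ℝ := ‖L‖ with hNdef
  have hN0 : 0 ≤ N := norm_nonneg _
  have hdiag : ∀ i, 0 ≤ (B i i).re := fun i => (DBB.psd_diag hB i).1
  have htr : ∑ i, (B i i).re = 1 := by
    have : (B.trace).re = 1 := by rw [hB1]; simp
    rw [Matrix.trace, Complex.re_sum] at this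
    exact this
  have haS : ∑ j ∈ S, (B j j).re = a := by
    have := hsplitR (fun i => (B i i).re)
    rw [htr] at this
    rw [hadef]; linarith
  have ha0 : 0 ≤ a := by
    rw [← haS]
    exact Finset.sum_nonneg fun j _ => hdiag j
  have ha1 : a ≤ 1 := by
    rw [hadef]; linarith [hdiag k]
  have hbk1 : (B k k).re ≤ 1 := by rw [hadef] at ha0; linarith
  -- vectors
  set f0 : EuclideanSpace ℂ (Fin d) :=
    (EuclideanSpace.equiv (Fin d) ℂ).symm (fun j => L j k) with hf0def
  set q : EuclideanSpace ℂ (Fin d) :=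
    (EuclideanSpace.equiv (Fin d) ℂ).symm (fun j => if j = k then 0 else B j k) with hqdef
  have hf0app : ∀ j, f0 j = L j k := fun j => rfl
  have hqapp : ∀ j, q j = if j = k then 0 else B j k := fun j => rfl
  have hfN : ‖f0‖ ≤ N := DBB.col_norm_le L k
  have hqa : ‖q‖ ^ 2 ≤ a := by
    rw [DBB.norm_sq_eq, hsplitR (fun j => ‖q j‖ ^ 2)]
    have h1 : ‖q k‖ ^ 2 = 0 := by rw [hqapp k]; simp
    rw [h1, zero_add, ← haS]
    refine Finset.sum_le_sum fun j hj => ?_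
    have hjk : j ≠ k := Finset.ne_of_mem_erase hj
    rw [hqapp j, if_neg hjk]
    calc ‖B j k‖ ^ 2 ≤ (B j j).re * (B k k).re := DBB.psd_minor hB j k
      _ ≤ (B j j).re * 1 := by gcongr; exact hdiag j
      _ = (B j j).re := mul_one _
  have hqn : ‖q‖ ≤ Real.sqrt a := by
    rw [← Real.sqrt_sq (norm_nonneg q)]
    exact Real.sqrt_le_sqrt hqa
  have hs₁bound : ‖s₁‖ ≤ Real.sqrt a * N := by
    have hinner : s₁ = inner (𝕜 := ℂ) q f0 := by
      rw [PiLp.inner_apply]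
      simp only [RCLike.inner_apply']
      rw [hsplit (fun j => (starRingEnd ℂ) (q j) * f0 j)]
      have h1 : (starRingEnd ℂ) (q k) * f0 k = 0 := by rw [hqapp k]; simp
      rw [h1, zero_add, hs₁def]
      refine Finset.sum_congr rfl fun j hj => ?_
      have hjk : j ≠ k := Finset.ne_of_mem_erase hj
      rw [hqapp j, if_neg hjk, hf0app j]
      have : (starRingEnd ℂ) (B j k) = B k j := by
        conv_rhs => rw [← hB.1.eq]
        simp [Matrix.conjTranspose_apply]
      rw [this]
    rw [hinner]
    calc ‖inner (𝕜 := ℂ) q f0‖ ≤ ‖q‖ * ‖f0‖ := norm_inner_le_norm _ _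
      _ ≤ Real.sqrt a * N := by gcongr
  have hs₂conj : s₂ = (starRingEnd ℂ) s₁ := by
    rw [hs₁def, hs₂def, map_sum]
    refine Finset.sum_congr rfl fun j _ => ?_
    rw [_root_.map_mul]
    have h1 : (starRingEnd ℂ) (B k j) = B j k := by
      conv_rhs => rw [← hB.1.eq]; simp [Matrix.conjTranspose_apply]
    have h2 : (starRingEnd ℂ) (L j k) = L k j := by
      conv_rhs => rw [← hL.eq]; simp [Matrix.conjTranspose_apply]
    rw [h1, h2]; ring
  have hs₂bound : ‖s₂‖ ≤ Real.sqrt a * N := by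
    rw [hs₂conj, Complex.norm_conj]; exact hs₁bound
  -- the matrix C' = Q B Q
  set Q : Matrix (Fin d) (Fin d) ℂ :=
    Matrix.diagonal (fun j => if j = k then 0 else 1) with hQdef
  set C' : Matrix (Fin d) (Fin d) ℂ := Q * B * Q with hC'def
  have hQherm : Qᴴ = Q := by
    have hv : star (fun j => if j = k then (0:ℂ) else 1)
        = (fun j => if j = k then (0:ℂ) else 1) := by
      funext j; by_cases h : j = k <;> simp [h]
    rw [hQdef, Matrix.diagonal_conjTranspose, hv]
  have hC'psd : C'.PosSemidef := by
    have := hB.mul_mul_conjTranspose_same Q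
    rwa [hQherm] at this
  have hC'app : ∀ i j, C' i j
      = (if i = k then 0 else 1) * B i j * (if j = k then 0 else 1) := by
    intro i j
    rw [hC'def, Matrix.mul_apply]
    simp [hQdef, Matrix.mul_diagonal, Matrix.diagonal_mul, Matrix.diagonal_apply,
      Finset.sum_ite_eq, mul_comm, mul_assoc]
  have hC'k : ∀ j, C' k j = 0 := fun j => by rw [hC'app]; simp
  have hC'k2 : ∀ i, C' i k = 0 := fun i => by rw [hC'app]; simp
  have hC'S : ∀ i j, i ≠ k → j ≠ k → C' i j = B i j := by
    intro i j hi hj; rw [hC'app, if_neg hi, if_neg hj]; ring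
  have htrC' : (C'.trace).re = a := by
    rw [Matrix.trace, Complex.re_sum, hsplitR (fun i => ((C'.diag i)).re)]
    have h1 : ((C'.diag k)).re = 0 := by rw [Matrix.diag_apply, hC'k k]; simp
    rw [h1, zero_add, ← haS]
    refine Finset.sum_congr rfl fun j hj => ?_
    have hjk : j ≠ k := Finset.ne_of_mem_erase hj
    rw [Matrix.diag_apply, hC'S j j hjk hjk]
  -- bound on r
  have hrtrace : r = (C' * L).trace := by
    have h1 : (C' * L).trace = ∑ i, ∑ j, C' i j * L j i := by
      rw [Matrix.trace]
      exact Finset.sum_congr rfl fun i _ => by rw [Matrix.diag_apply, Matrix.mul_apply]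
    rw [h1, hsplit (fun i => ∑ j, C' i j * L j i)]
    have h2 : ∑ j, C' k j * L j k = 0 := by
      refine Finset.sum_eq_zero fun j _ => by rw [hC'k j]; ring
    rw [h2, zero_add, hrdef]
    refine Finset.sum_congr rfl fun i hi => ?_
    have hik : i ≠ k := Finset.ne_of_mem_erase hi
    rw [hsplit (fun j => C' i j * L j i)]
    have h3 : C' i k * L k i = 0 := by rw [hC'k2 i]; ring
    rw [h3, zero_add]
    exact (Finset.sum_congr rfl fun j hj =>
      by rw [hC'S i j hik (Finset.ne_of_mem_erase hj)]).symm
  have hrbound : ‖r‖ ≤ N * a := by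
    rw [hrtrace]
    calc ‖(C' * L).trace‖ ≤ ‖L‖ * (C'.trace).re :=
          DBB.trace_bound C' L hC'psd
      _ = N * a := by rw [htrC', hNdef]
  -- bound on m
  set F : Matrix (Fin d) (Fin d) ℂ :=
    Matrix.vecMulVec (f0 : Fin d → ℂ) (star (f0 : Fin d → ℂ)) with hFdef
  have hFapp : ∀ i j, F i j = L i k * (starRingEnd ℂ) (L j k) := by
    intro i j
    rw [hFdef, Matrix.vecMulVec_apply]
    simp [hf0app, Complex.star_def]
  have hFnorm : ‖F‖ ≤ N ^ 2 := by
    calc ‖F‖ ≤ ‖f0‖ ^ 2 := DBB.outer_norm_le f0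
      _ ≤ N ^ 2 := by gcongr
  have hmtrace : m = (C' * F).trace := by
    have h1 : (C' * F).trace = ∑ i, ∑ j, C' i j * F j i := by
      rw [Matrix.trace]
      exact Finset.sum_congr rfl fun i _ => by rw [Matrix.diag_apply, Matrix.mul_apply]
    rw [h1, hsplit (fun i => ∑ j, C' i j * F j i)]
    have h2 : ∑ j, C' k j * F j k = 0 := by
      refine Finset.sum_eq_zero fun j _ => by rw [hC'k j]; ring
    rw [h2, zero_add, hmdef]
    refine Finset.sum_congr rfl fun i hi => ?_
    have hik : i ≠ k := Finset.ne_of_mem_erase hi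
    rw [hsplit (fun j => C' i j * F j i)]
    have h3 : C' i k * F k i = 0 := by rw [hC'k2 i]; ring
    rw [h3, zero_add]
    refine Finset.sum_congr rfl fun j hj => ?_
    rw [hC'S i j hik (Finset.ne_of_mem_erase hj), hFapp j i]
    have h4 : (starRingEnd ℂ) (L i k) = L k i := by
      conv_rhs => rw [← hL.eq]; simp [Matrix.conjTranspose_apply]
    rw [h4]; ring
  have hmbound : ‖m‖ ≤ N ^ 2 * a := by
    rw [hmtrace]
    calc ‖(C' * F).trace‖ ≤ ‖F‖ * (C'.trace).re :=
          DBB.trace_bound C' F hC'psd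
      _ ≤ N ^ 2 * a := by rw [htrC']; gcongr
  -- |L k k| ≤ N
  have hlk : ‖L k k‖ ≤ N := by
    have := DBB.component_le f0 k
    rw [hf0app k] at this
    exact this.trans hfN
  -- |1 - B k k| = a
  have h1b : ‖1 - B k k‖ = a := by
    have him : (B k k).im = 0 := (DBB.psd_diag hB k).2
    have : (1 : ℂ) - B k k = ((a : ℝ) : ℂ) := by
      apply Complex.ext
      · simp [hadef]
      · simp [him]
    rw [this, Complex.norm_real, Real.norm_eq_abs, abs_of_nonneg ha0]
  -- assemble
  rw [key]
  have hsum : ‖s₁ + s₂‖ ≤ 2 * (Real.sqrt a * N) := by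
    calc ‖s₁ + s₂‖ ≤ ‖s₁‖ + ‖s₂‖ := norm_add_le _ _
      _ ≤ 2 * (Real.sqrt a * N) := by linarith
  have hsqrt_sq : Real.sqrt a ^ 2 = a := Real.sq_sqrt ha0
  have hsqrt_le1 : Real.sqrt a ≤ 1 := Real.sqrt_le_one.mpr ha1
  have hsqrt0 : 0 ≤ Real.sqrt a := Real.sqrt_nonneg a
  calc ‖(s₁ + s₂)/2 * ((1 - B k k) * L k k - (s₁ + s₂) - r) + m‖
      ≤ ‖(s₁ + s₂)/2 * ((1 - B k k) * L k k - (s₁ + s₂) - r)‖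
        + ‖m‖ := norm_add_le _ _
    _ = ‖s₁ + s₂‖ / 2
        * ‖(1 - B k k) * L k k - (s₁ + s₂) - r‖ + ‖m‖ := by
        rw [norm_mul, norm_div, Complex.norm_two]
    _ ≤ ‖s₁ + s₂‖ / 2
        * (a * N + ‖s₁ + s₂‖ + ‖r‖) + ‖m‖ := by
        have hX : ‖(1 - B k k) * L k k - (s₁ + s₂) - r‖
            ≤ a * N + ‖s₁ + s₂‖ + ‖r‖ := by
          calc ‖(1 - B k k) * L k k - (s₁ + s₂) - r‖
              ≤ ‖(1 - B k k) * L k k - (s₁ + s₂)‖ + ‖r‖ :=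
                norm_sub_le _ _
            _ ≤ ‖(1 - B k k) * L k k‖ + ‖s₁ + s₂‖
                + ‖r‖ := by
                have : ‖(1 - B k k) * L k k - (s₁ + s₂)‖
                    ≤ ‖(1 - B k k) * L k k‖ + ‖s₁ + s₂‖ :=
                  norm_sub_le _ _
                linarith
            _ ≤ a * N + ‖s₁ + s₂‖ + ‖r‖ := by
                rw [norm_mul, h1b]
                have : a * ‖L k k‖ ≤ a * N := by gcongr
                linarith
        have h2 : (0:ℝ) ≤ ‖s₁ + s₂‖ / 2 := by positivity
        have h3 := mul_le_mul_of_nonneg_left hX h2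
        linarith
    _ ≤ 5 * N ^ 2 * a := by
        set A1 := ‖s₁ + s₂‖ with hA1
        set sa := Real.sqrt a with hsa
        clear_value s₁ s₂ r m a N A1 sa
        have hA1nn : 0 ≤ A1 := hA1 ▸ norm_nonneg _
        have hrnn : 0 ≤ ‖r‖ := norm_nonneg _
        have hmnn : 0 ≤ ‖m‖ := norm_nonneg _
        have t1 : A1 / 2 ≤ sa * N := by linarith
        have t2 : a * N + A1 + ‖r‖ ≤ 2 * a * N + 2 * (sa * N) := by
          have : ‖r‖ ≤ N * a := hrbound
          linarith
        have t0 : (0:ℝ) ≤ a * N + A1 + ‖r‖ := by positivity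
        have t3 : A1 / 2 * (a * N + A1 + ‖r‖)
            ≤ (sa * N) * (2 * a * N + 2 * (sa * N)) :=
          mul_le_mul t1 t2 t0 (by positivity)
        have t4 : (sa * N) * (2 * a * N + 2 * (sa * N)) = 2 * (sa * a) * N ^ 2 + 2 * a * N ^ 2 := by
          linear_combination (2 * N ^ 2) * hsqrt_sq
        have t5 : sa * a ≤ a := mul_le_of_le_one_left ha0 hsqrt_le1
        have t6 : (sa * a) * N ^ 2 ≤ a * N ^ 2 := mul_le_mul_of_nonneg_right t5 (sq_nonneg N)
        have t7 : A1 / 2 * (a * N + A1 + ‖r‖)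
            ≤ 2 * (sa * a) * N ^ 2 + 2 * a * N ^ 2 := t3.trans_eq t4
        linarith [t7, t6, hmbound]
  done
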